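/- Let f ≥ 1, let Ṽ be the 𝔽₂-vector space with basis e_0, e_1, …, e_{2f}, and let V be its quotient by the one-dimensional subspace spanned by e_0 + e_2 + ⋯ + e_{2f}. Equip Ṽ with the symmetric bilinear form determined by ⟨e_i, e_j⟩ = 1 if |i − j| = 1 and ⟨e_i, e_j⟩ = 0 otherwise; this form has kernel spanned by e_0 + e_2 + ⋯ + e_{2f} and hence induces a nondegenerate symmetric bilinear form on V. Let 𝒢 ⊆ V be the span of (the images of) e_1, e_3, …, e_{2f−1} and let Ĝ ⊆ V be the span of (the images of) e_0, e_2, …, e_{2f}. Fix x ∈ 𝒢 and write x = Σ_{j ∈ n(x)} e_j with n(x) ⊆ {1, 3, …, 2f−1}, and let H_x ⊆ 𝒢 be the span of {e_j : j ∈ n(x)}. Then the annihilator {μ ∈ Ĝ : ⟨μ, h⟩ = 0 for all h ∈ H_x} is exactly the span in V of the blocks of x. -/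
import Mathlib


/-- `Ṽ`: the `𝔽₂`-vector space with basis `e 0, …, e (2f)`. -/
abbrev Vt (f : ℕ) := Fin (2 * f + 1) → ZMod 2

/-- The basis vector `e j` of `Ṽ` (zero if `j > 2f`). -/
def e (f : ℕ) (j : ℕ) : Vt f := fun t => if (t : ℕ) = j then 1 else 0

/-- The symmetric bilinear form on `Ṽ` with `⟨e i, e j⟩ = 1` iff `|i - j| = 1`. -/
def Bt (f : ℕ) (v w : Vt f) : ZMod 2 :=
  ∑ i : Fin (2 * f + 1), ∑ j : Fin (2 * f + 1),
    (if (i : ℕ) + 1 = (j : ℕ) ∨ (j : ℕ) + 1 = (i : ℕ) then v i * w j else 0)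

/-- The relation `e 0 + e 2 + ⋯ + e (2f)`, spanning the kernel of the form. -/
def zrel (f : ℕ) : Vt f := ∑ i ∈ Finset.range (f + 1), e f (2 * i)

/-- `V`: the quotient of `Ṽ` by the span of `e 0 + e 2 + ⋯ + e (2f)`. -/
abbrev Vq (f : ℕ) := Vt f ⧸ (Submodule.span (ZMod 2) {zrel f})

/-- The quotient map `Ṽ → V`. -/
def toVq (f : ℕ) (v : Vt f) : Vq f := Submodule.Quotient.mk v

/-- The symmetric bilinear form induced on `V` by the form on `Ṽ` (the form on
`Ṽ` kills `zrel f`, so evaluating on any representatives gives the induced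
form; it is nondegenerate on `V`). -/
noncomputable def Bq (f : ℕ) (v w : Vq f) : ZMod 2 :=
  Bt f (Quotient.out v) (Quotient.out w)


section Aux

private def W (f : ℕ) (v : Vt f) (m : ℕ) : ZMod 2 := if h : m < 2*f+1 then v ⟨m, h⟩ else 0

private def blk (f i k : ℕ) : Vt f := ∑ t ∈ Finset.range (k + 1), e f (i + 2 * t)

lemma zmod2_ne_zero {a : ZMod 2} (h : a ≠ 0) : a = 1 := by revert a; decide

lemma zmod2_add_eq_zero {a b : ZMod 2} (h : a + b = 0) : a = b := by revert h; revert a b; decide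

lemma W_e (f j m : ℕ) (hj : j ≤ 2*f) : W f (e f j) m = if m = j then 1 else 0 := by
  unfold W e
  split_ifs with h1 h2 h2
  · rfl
  · rfl
  · omega
  · rfl

lemma Bt_symm (f : ℕ) (v w : Vt f) : Bt f v w = Bt f w v := by
  unfold Bt
  rw [Finset.sum_comm]
  refine Finset.sum_congr rfl fun j _ => Finset.sum_congr rfl fun i _ => ?_
  split_ifs with h1 h2 h2
  · ring
  · exact (h2 h1.symm).elim
  · exact (h1 h2.symm).elim
  · rfl

lemma Bt_add_right (f : ℕ) (v w₁ w₂ : Vt f) : Bt f v (w₁ + w₂) = Bt f v w₁ + Bt f v w₂ := by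
  unfold Bt
  rw [← Finset.sum_add_distrib]
  refine Finset.sum_congr rfl fun i _ => ?_
  rw [← Finset.sum_add_distrib]
  refine Finset.sum_congr rfl fun j _ => ?_
  simp only [Pi.add_apply]
  split_ifs <;> ring

lemma Bt_add_left (f : ℕ) (v₁ v₂ w : Vt f) : Bt f (v₁ + v₂) w = Bt f v₁ w + Bt f v₂ w := by
  rw [Bt_symm, Bt_add_right, Bt_symm f w v₁, Bt_symm f w v₂]

lemma Bt_zero_right (f : ℕ) (v : Vt f) : Bt f v 0 = 0 := by
  unfold Bt
  refine Finset.sum_eq_zero fun i _ => Finset.sum_eq_zero fun j _ => ?_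
  simp

lemma Bt_zero_left (f : ℕ) (w : Vt f) : Bt f 0 w = 0 := by
  rw [Bt_symm, Bt_zero_right]

lemma Bt_smul_right (f : ℕ) (c : ZMod 2) (v w : Vt f) : Bt f v (c • w) = c * Bt f v w := by
  unfold Bt
  rw [Finset.mul_sum]
  refine Finset.sum_congr rfl fun i _ => ?_
  rw [Finset.mul_sum]
  refine Finset.sum_congr rfl fun j _ => ?_
  simp only [Pi.smul_apply, smul_eq_mul]
  split_ifs <;> ring

lemma Bt_smul_left (f : ℕ) (c : ZMod 2) (v w : Vt f) : Bt f (c • v) w = c * Bt f v w := by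
  rw [Bt_symm, Bt_smul_right, Bt_symm]

lemma Bt_sum_right (f : ℕ) {α : Type*} (s : Finset α) (v : Vt f) (g : α → Vt f) :
    Bt f v (∑ a ∈ s, g a) = ∑ a ∈ s, Bt f v (g a) := by
  classical
  induction s using Finset.induction_on with
  | empty => simp [Bt_zero_right]
  | @insert a s' h ih => rw [Finset.sum_insert h, Finset.sum_insert h, Bt_add_right, ih]

lemma zmod2_add_self (a : ZMod 2) : a + a = 0 := by revert a; decide

lemma sum_coordpick (f : ℕ) (v : Vt f) (m : ℕ) :
    (∑ i : Fin (2*f+1), if (i:ℕ) = m then v i else 0) = W f v m := by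
  unfold W
  split_ifs with h
  · rw [Finset.sum_eq_single (⟨m, h⟩ : Fin (2*f+1))]
    · simp
    · intro j _ hj
      have : (j:ℕ) ≠ m := fun hh => hj (Fin.ext hh)
      simp [this]
    · simp
  · refine Finset.sum_eq_zero fun i _ => ?_
    have : (i:ℕ) ≠ m := by omega
    simp [this]

lemma Bt_e_right (f : ℕ) (v : Vt f) (m : ℕ) (hm : m ≤ 2*f) :
    Bt f v (e f m) = (if 1 ≤ m then W f v (m-1) else 0) + W f v (m+1) := by
  have hm' : m < 2*f+1 := by omega
  unfold Bt
  have step1 : ∀ i : Fin (2*f+1),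
      (∑ j : Fin (2*f+1), if (i:ℕ) + 1 = (j:ℕ) ∨ (j:ℕ) + 1 = (i:ℕ) then v i * e f m j else 0)
      = (if ((i:ℕ)+1 = m ∨ m+1 = (i:ℕ)) then v i else 0) := by
    intro i
    rw [Finset.sum_eq_single (⟨m, hm'⟩ : Fin (2*f+1))]
    · simp only [e]
      norm_num
    · intro j _ hj
      have : (j:ℕ) ≠ m := fun hh => hj (Fin.ext hh)
      simp [e, this]
    · simp
  rw [Finset.sum_congr rfl fun i _ => step1 i]
  by_cases hm1 : 1 ≤ m
  · have split : ∀ i : Fin (2*f+1),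
        (if ((i:ℕ)+1 = m ∨ m+1 = (i:ℕ)) then v i else 0)
        = (if (i:ℕ) = m-1 then v i else 0) + (if (i:ℕ) = m+1 then v i else 0) := by
      intro i
      by_cases h1 : (i:ℕ) = m - 1
      · by_cases h2 : (i:ℕ) = m+1
        · exfalso; omega
        · rw [if_pos (by omega : (i:ℕ)+1 = m ∨ m+1 = (i:ℕ)), if_pos h1, if_neg h2, add_zero]
      · by_cases h2 : (i:ℕ) = m+1
        · rw [if_pos (by omega : (i:ℕ)+1 = m ∨ m+1 = (i:ℕ)), if_neg h1, if_pos h2, zero_add]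
        · rw [if_neg (by omega : ¬((i:ℕ)+1 = m ∨ m+1 = (i:ℕ))), if_neg h1, if_neg h2, add_zero]
    rw [Finset.sum_congr rfl fun i _ => split i, Finset.sum_add_distrib,
      sum_coordpick, sum_coordpick, if_pos hm1]
  · have hm0 : m = 0 := by omega
    subst hm0
    have split : ∀ i : Fin (2*f+1),
        (if ((i:ℕ)+1 = 0 ∨ 0+1 = (i:ℕ)) then v i else 0)
        = (if (i:ℕ) = 0+1 then v i else 0) := by
      intro i
      by_cases h2 : (i:ℕ) = 0+1
      · rw [if_pos (Or.inr (by omega)), if_pos h2]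
      · rw [if_neg (by omega : ¬((i:ℕ)+1 = 0 ∨ 0+1 = (i:ℕ))), if_neg h2]
    rw [Finset.sum_congr rfl fun i _ => split i, sum_coordpick]
    norm_num

lemma Bt_zrel_right (f : ℕ) (v : Vt f) : Bt f v (zrel f) = 0 := by
  unfold zrel
  rw [Bt_sum_right]
  have he : ∀ i ∈ Finset.range (f+1), Bt f v (e f (2*i))
      = (if 1 ≤ 2*i then W f v (2*i-1) else 0) + W f v (2*i+1) := by
    intro i hi
    exact Bt_e_right f v (2*i) (by simp at hi; omega)
  rw [Finset.sum_congr rfl he, Finset.sum_add_distrib]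
  have h1 : (∑ i ∈ Finset.range (f+1), if 1 ≤ 2*i then W f v (2*i-1) else 0)
      = ∑ i ∈ Finset.range f, W f v (2*i+1) := by
    rw [Finset.sum_range_succ']
    rw [if_neg (by omega : ¬ (1 ≤ 2*0)), add_zero]
    refine Finset.sum_congr rfl fun i _ => ?_
    rw [if_pos (by omega : 1 ≤ 2*(i+1))]
    have h3 : 2*(i+1)-1 = 2*i+1 := by omega
    rw [h3]
  have h2 : (∑ i ∈ Finset.range (f+1), W f v (2*i+1))
      = ∑ i ∈ Finset.range f, W f v (2*i+1) := by
    rw [Finset.sum_range_succ]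
    have : W f v (2*f+1) = 0 := by unfold W; rw [dif_neg (by omega)]
    rw [this, add_zero]
  rw [h1, h2, zmod2_add_self]

lemma Bt_zrel_left (f : ℕ) (v : Vt f) : Bt f (zrel f) v = 0 := by
  rw [Bt_symm, Bt_zrel_right]

lemma out_mk (f : ℕ) (u : Vt f) :
    ∃ c : ZMod 2, (Quotient.out (toVq f u) : Vt f) = u + c • zrel f := by
  have h0 : Submodule.Quotient.mk (p := Submodule.span (ZMod 2) {zrel f})
      (Quotient.out (toVq f u)) = toVq f u := by
    exact Quotient.out_eq _
  rw [toVq, Submodule.Quotient.eq] at h0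
  rw [Submodule.mem_span_singleton] at h0
  obtain ⟨c, hc⟩ := h0
  refine ⟨c, ?_⟩
  rw [eq_sub_iff_add_eq] at hc
  show Quotient.out (Submodule.Quotient.mk u) = u + c • zrel f
  rw [← hc]
  abel

lemma Bq_mk (f : ℕ) (u w : Vt f) : Bq f (toVq f u) (toVq f w) = Bt f u w := by
  obtain ⟨c, hc⟩ := out_mk f u
  obtain ⟨d, hd⟩ := out_mk f w
  unfold Bq
  rw [hc, hd, Bt_add_left, Bt_add_right, Bt_add_right, Bt_smul_left, Bt_smul_right,
    Bt_smul_right, Bt_zrel_right, Bt_zrel_left, Bt_smul_left, Bt_zrel_left]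
  ring

lemma mk_out (f : ℕ) (μ : Vq f) : toVq f (Quotient.out μ) = μ := Quotient.out_eq μ

lemma toVq_add (f : ℕ) (u v : Vt f) : toVq f (u + v) = toVq f u + toVq f v := by
  unfold toVq; rw [Submodule.Quotient.mk_add]

lemma toVq_smul (f : ℕ) (c : ZMod 2) (u : Vt f) : toVq f (c • u) = c • toVq f u := by
  unfold toVq; rw [Submodule.Quotient.mk_smul]

lemma toVq_sum (f : ℕ) {α : Type*} (s : Finset α) (g : α → Vt f) :
    toVq f (∑ a ∈ s, g a) = ∑ a ∈ s, toVq f (g a) := by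
  classical
  induction s using Finset.induction_on with
  | empty => rfl
  | @insert a s' h ih => rw [Finset.sum_insert h, Finset.sum_insert h, toVq_add, ih]

lemma Bq_add_left (f : ℕ) (a b h : Vq f) : Bq f (a + b) h = Bq f a h + Bq f b h := by
  rw [← mk_out f a, ← mk_out f b, ← mk_out f h, ← toVq_add, Bq_mk, Bq_mk, Bq_mk, Bt_add_left]

lemma Bq_add_right (f : ℕ) (a h₁ h₂ : Vq f) : Bq f a (h₁ + h₂) = Bq f a h₁ + Bq f a h₂ := by
  rw [← mk_out f a, ← mk_out f h₁, ← mk_out f h₂, ← toVq_add, Bq_mk, Bq_mk, Bq_mk, Bt_add_right]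

lemma Bq_smul_left (f : ℕ) (c : ZMod 2) (a h : Vq f) : Bq f (c • a) h = c * Bq f a h := by
  rw [← mk_out f a, ← mk_out f h, ← toVq_smul, Bq_mk, Bq_mk, Bt_smul_left]

lemma Bq_smul_right (f : ℕ) (c : ZMod 2) (a h : Vq f) : Bq f a (c • h) = c * Bq f a h := by
  rw [← mk_out f a, ← mk_out f h, ← toVq_smul, Bq_mk, Bq_mk, Bt_smul_right]

lemma Bq_zero_left (f : ℕ) (h : Vq f) : Bq f 0 h = 0 := by
  have : (0 : Vq f) = toVq f 0 := rfl
  rw [this, ← mk_out f h, Bq_mk, Bt_symm]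
  have : (0 : Vt f) = ∑ a ∈ (∅ : Finset ℕ), e f a := by simp
  rw [this, Bt_sum_right, Finset.sum_empty]

lemma Bq_zero_right (f : ℕ) (a : Vq f) : Bq f a 0 = 0 := by
  have : (0 : Vq f) = toVq f 0 := rfl
  rw [this, ← mk_out f a, Bq_mk]
  have : (0 : Vt f) = ∑ a ∈ (∅ : Finset ℕ), e f a := by simp
  rw [this, Bt_sum_right, Finset.sum_empty]

lemma W_add (f : ℕ) (u v : Vt f) (m : ℕ) : W f (u + v) m = W f u m + W f v m := by
  unfold W
  split_ifs <;> simp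

lemma W_sum (f : ℕ) {α : Type*} (s : Finset α) (g : α → Vt f) (m : ℕ) :
    W f (∑ a ∈ s, g a) m = ∑ a ∈ s, W f (g a) m := by
  classical
  induction s using Finset.induction_on with
  | empty => simp [W]
  | @insert a s' h ih => rw [Finset.sum_insert h, Finset.sum_insert h, W_add, ih]


lemma W_blk (f i k : ℕ) (hik : i + 2*k ≤ 2*f) (m : ℕ) :
    W f (blk f i k) m = if ∃ t, t ≤ k ∧ m = i + 2*t then 1 else 0 := by
  unfold blk
  rw [W_sum]
  have he : ∀ t ∈ Finset.range (k+1), W f (e f (i+2*t)) m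
      = if m = i + 2*t then 1 else 0 := by
    intro t ht
    simp only [Finset.mem_range] at ht
    exact W_e f (i+2*t) m (by omega)
  rw [Finset.sum_congr rfl he]
  by_cases hex : ∃ t, t ≤ k ∧ m = i + 2*t
  · obtain ⟨t₀, ht₀, hm₀⟩ := hex
    rw [if_pos ⟨t₀, ht₀, hm₀⟩, Finset.sum_eq_single t₀]
    · rw [if_pos hm₀]
    · intro t ht hne
      rw [if_neg (by omega)]
    · intro h
      exact absurd (Finset.mem_range.mpr (by omega)) h
  · rw [if_neg hex]
    refine Finset.sum_eq_zero fun t ht => ?_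
    simp only [Finset.mem_range] at ht
    rw [if_neg (fun hh => hex ⟨t, by omega, hh⟩)]

lemma blk_pair (f : ℕ) (N : Finset ℕ) (hN : ∀ j ∈ N, Odd j ∧ j < 2*f)
    (i k : ℕ) (hik : i + 2*k ≤ 2*f)
    (hleft : 1 ≤ i → i - 1 ∉ N) (hright : i + 2*k + 1 ∉ N) :
    ∀ j ∈ N, Bt f (blk f i k) (e f j) = 0 := by
  intro j hj
  obtain ⟨hodd, hlt⟩ := hN j hj
  have hj1 : 1 ≤ j := hodd.pos
  rw [Bt_e_right f _ j (by omega), if_pos hj1, W_blk f i k hik, W_blk f i k hik]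
  have hiff : (∃ t, t ≤ k ∧ j - 1 = i + 2*t) ↔ (∃ t, t ≤ k ∧ j + 1 = i + 2*t) := by
    constructor
    · rintro ⟨t, ht, hjt⟩
      rcases Nat.lt_or_ge t k with h | h
      · exact ⟨t+1, by omega, by omega⟩
      · exfalso
        have : j = i + 2*k + 1 := by omega
        exact hright (this ▸ hj)
    · rintro ⟨t, ht, hjt⟩
      rcases Nat.eq_zero_or_pos t with h | h
      · exfalso
        have h1i : 1 ≤ i := by omega
        have : j = i - 1 := by omega
        exact hleft h1i (this ▸ hj)
      · exact ⟨t-1, by omega, by omega⟩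
  by_cases h1 : ∃ t, t ≤ k ∧ j - 1 = i + 2*t
  · rw [if_pos h1, if_pos (hiff.mp h1), zmod2_add_self]
  · rw [if_neg h1, if_neg (fun hh => h1 (hiff.mpr hh)), zmod2_add_self]

lemma W_eq_coord (f : ℕ) (v : Vt f) (t : Fin (2*f+1)) : W f v (t:ℕ) = v t := by
  unfold W
  rw [dif_pos t.isLt]

/-- compat with `N`: `W w (j-1) = W w (j+1)` for `j ∈ N`. -/
lemma compat_step (f : ℕ) (N : Finset ℕ) (hN : ∀ j ∈ N, Odd j ∧ j < 2*f)
    (w : Vt f) (hw : ∀ j ∈ N, Bt f w (e f j) = 0) (j : ℕ) (hj : j ∈ N) :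
    W f w (j-1) = W f w (j+1) := by
  obtain ⟨hodd, hlt⟩ := hN j hj
  have h := hw j hj
  rw [Bt_e_right f w j (by omega), if_pos (show 1 ≤ j from hodd.pos)] at h
  exact zmod2_add_eq_zero h

lemma key (f : ℕ) (N : Finset ℕ) (hN : ∀ j ∈ N, Odd j ∧ j < 2*f) :
    ∀ n : ℕ, ∀ w : Vt f, (Finset.univ.filter (fun t => w t ≠ 0)).card = n →
    (∀ t : Fin (2*f+1), Odd (t:ℕ) → w t = 0) →
    (∀ j ∈ N, Bt f w (e f j) = 0) →
    toVq f w ∈ Submodule.span (ZMod 2)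
        {v : Vq f | ∃ i k, Even i ∧ i + 2 * k ≤ 2 * f ∧
          (∀ j, Odd j → i < j → j < i + 2 * k → j ∈ N) ∧
          (1 ≤ i → i - 1 ∉ N) ∧ (i + 2 * k + 1 ∉ N) ∧
          v = toVq f (∑ t ∈ Finset.range (k + 1), e f (i + 2 * t))} := by
  intro n
  induction n using Nat.strong_induction_on with
  | _ n IH =>
  intro w hcard hwodd hwcompat
  by_cases hw0 : w = 0
  · rw [hw0]
    show toVq f 0 ∈ _
    have : toVq f 0 = 0 := rfl
    rw [this]
    exact Submodule.zero_mem _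
  -- least nonzero coordinate
  · have hex : ∃ m, W f w m ≠ 0 := by
      by_contra hc
      push_neg at hc
      apply hw0
      funext t
      rw [Pi.zero_apply]
      have := hc (t : ℕ)
      rwa [W_eq_coord] at this
    set i := Nat.find hex with hi_def
    have hiW : W f w i ≠ 0 := Nat.find_spec hex
    have himin : ∀ m < i, W f w m = 0 := by
      intro m hm
      have := Nat.find_min hex hm
      rwa [not_not] at this
    have hile : i ≤ 2*f := by
      by_contra hc
      exact hiW (by unfold W; rw [dif_neg (by omega)])
    have hieven : Even i := by
      rcases Nat.even_or_odd i with h | h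
      · exact h
      · exfalso
        apply hiW
        unfold W
        rw [dif_pos (by omega : i < 2*f+1)]
        exact hwodd _ h
    -- the block length
    have hkex : ∃ m, i + 2*m + 1 ∉ N := by
      refine ⟨f, fun hc => ?_⟩
      have := (hN _ hc).2
      omega
    set k := Nat.find hkex with hk_def
    have hkN : i + 2*k + 1 ∉ N := Nat.find_spec hkex
    have hmidt : ∀ t < k, i + 2*t + 1 ∈ N := by
      intro t ht
      have := Nat.find_min hkex ht
      rwa [not_not] at this
    have hik : i + 2*k ≤ 2*f := by
      rcases Nat.eq_zero_or_pos k with h | h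
      · omega
      · have := (hN _ (hmidt (k-1) (by omega))).2
        omega
    have hleft : 1 ≤ i → i - 1 ∉ N := by
      intro h1 hmem
      have hstep := compat_step f N hN w hwcompat (i-1) hmem
      have h2 : 2 ≤ i := by
        have := (hN _ hmem).1
        rcases this with ⟨r, hr⟩
        omega
      have : W f w (i-2) = W f w i := by
        have e1 : i - 1 - 1 = i - 2 := by omega
        have e2 : i - 1 + 1 = i := by omega
        rw [e1, e2] at hstep
        exact hstep
      exact hiW (by rw [← this]; exact himin (i-2) (by omega))
    have hmid : ∀ j, Odd j → i < j → j < i + 2*k → j ∈ N := by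
      intro j hodd hij hjk
      obtain ⟨r, hr⟩ := hodd
      obtain ⟨s, hs⟩ := hieven
      have : j = i + 2*((j-i-1)/2) + 1 := by omega
      rw [this]
      exact hmidt _ (by omega)
    -- block is in the support with value 1
    have hsupp : ∀ t, t ≤ k → W f w (i + 2*t) = 1 := by
      intro t
      induction t with
      | zero =>
        intro _
        simpa using zmod2_ne_zero hiW
      | succ t iht =>
        intro ht
        have hjN : i + 2*t + 1 ∈ N := hmidt t (by omega)
        have hstep := compat_step f N hN w hwcompat (i+2*t+1) hjN
        have e1 : i + 2*t + 1 - 1 = i + 2*t := by omega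
        have e2 : i + 2*t + 1 + 1 = i + 2*(t+1) := by omega
        rw [e1, e2] at hstep
        rw [← hstep]
        exact iht (by omega)
    -- subtract the block
    set B := blk f i k with hB_def
    set w' := w + B with hw'_def
    have hBcoord : ∀ t : Fin (2*f+1), B t = if ∃ s, s ≤ k ∧ (t:ℕ) = i + 2*s then 1 else 0 := by
      intro t
      rw [← W_eq_coord f B t, hB_def, W_blk f i k hik]
    have hw'odd : ∀ t : Fin (2*f+1), Odd (t:ℕ) → w' t = 0 := by
      intro t ht
      have h1 : B t = 0 := by
        rw [hBcoord t, if_neg]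
        rintro ⟨s, hs, hts⟩
        obtain ⟨r, hr⟩ := ht
        obtain ⟨q, hq⟩ := hieven
        omega
      show w t + B t = 0
      rw [hwodd t ht, h1, add_zero]
    have hw'compat : ∀ j ∈ N, Bt f w' (e f j) = 0 := by
      intro j hj
      show Bt f (w + B) (e f j) = 0
      rw [Bt_add_left, hwcompat j hj, blk_pair f N hN i k hik hleft hkN j hj, add_zero]
    have hw'card : (Finset.univ.filter (fun t => w' t ≠ 0)).card < n := by
      rw [← hcard]
      apply Finset.card_lt_card
      constructor
      · intro t ht
        simp only [Finset.mem_filter, Finset.mem_univ, true_and] at ht ⊢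
        by_contra hwt
        apply ht
        have hBt : B t = 0 := by
          rw [hBcoord t, if_neg]
          rintro ⟨s, hs, hts⟩
          have : W f w (t:ℕ) = 1 := hts ▸ hsupp s hs
          rw [W_eq_coord] at this
          rw [hwt] at this
          exact one_ne_zero this.symm
        show w t + B t = 0
        rw [hwt, hBt, add_zero]
      · intro hsub
        have hiFin : (⟨i, by omega⟩ : Fin (2*f+1)) ∈ Finset.univ.filter (fun t => w t ≠ 0) := by
          simp only [Finset.mem_filter, Finset.mem_univ, true_and]
          intro hc
          apply hiW
          rw [← W_eq_coord f w ⟨i, by omega⟩] at hc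
          exact hc
        have := hsub hiFin
        simp only [Finset.mem_filter, Finset.mem_univ, true_and] at this
        apply this
        show w _ + B _ = 0
        have hwi : w ⟨i, by omega⟩ = 1 := by
          have := hsupp 0 (Nat.zero_le k)
          rw [Nat.mul_zero, Nat.add_zero] at this
          rw [← W_eq_coord f w ⟨i, by omega⟩]
          exact this
        have hBi : B ⟨i, by omega⟩ = 1 := by
          rw [hBcoord, if_pos ⟨0, Nat.zero_le k, by simp⟩]
        rw [hwi, hBi]
        exact zmod2_add_self 1
    have hmem' := IH _ hw'card w' rfl hw'odd hw'compat
    have hsplit : toVq f w = toVq f w' + toVq f B := by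
      rw [← toVq_add]
      congr 1
      funext t
      show w t = w t + B t + B t
      rw [add_assoc, zmod2_add_self, add_zero]
    rw [hsplit]
    refine Submodule.add_mem _ hmem' (Submodule.subset_span ?_)
    exact ⟨i, k, hieven, hik, hmid, hleft, hkN, rfl⟩

end Aux

/-- Let `N = n(x) ⊆ {1, 3, …, 2f-1}` be the support of `x = ∑_{j ∈ N} e j ∈ 𝒢`,
`𝒢` the span in `V` of the images of odd basis vectors, `Ĝ` the span of the
images of even basis vectors, and `H_x ⊆ 𝒢` the span of `{e j : j ∈ N}`.  Then
the annihilator `{μ ∈ Ĝ : ⟨μ, h⟩ = 0 for all h ∈ H_x}` is exactly the span in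
`V` of the blocks of `x`, where a block of `x` is the image of
`e i + e (i+2) + ⋯ + e (i+2k)` with `i` even, `{i+1, …, i+2k-1}` odd ⊆ `N`,
`i - 1 ∉ N`, and `i + 2k + 1 ∉ N`. -/


theorem stmt0 (f : ℕ) (hf : 1 ≤ f) (N : Finset ℕ)
    (hN : ∀ j ∈ N, Odd j ∧ j < 2 * f)
    (x : Vq f) (hx : x = toVq f (∑ j ∈ N, e f j))
    (G : Submodule (ZMod 2) (Vq f))
    (hG : G = Submodule.span (ZMod 2)
      {v | ∃ j, Odd j ∧ j < 2 * f ∧ v = toVq f (e f j)})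
    (Ghat : Submodule (ZMod 2) (Vq f))
    (hGhat : Ghat = Submodule.span (ZMod 2)
      {v | ∃ j, Even j ∧ j ≤ 2 * f ∧ v = toVq f (e f j)})
    (Hx : Submodule (ZMod 2) (Vq f))
    (hHx : Hx = Submodule.span (ZMod 2) {v | ∃ j ∈ N, v = toVq f (e f j)}) :
    {μ : Vq f | μ ∈ Ghat ∧ ∀ h ∈ Hx, Bq f μ h = 0} =
      ↑(Submodule.span (ZMod 2)
        {v : Vq f | ∃ i k, Even i ∧ i + 2 * k ≤ 2 * f ∧
          (∀ j, Odd j → i < j → j < i + 2 * k → j ∈ N) ∧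
          (1 ≤ i → i - 1 ∉ N) ∧ (i + 2 * k + 1 ∉ N) ∧
          v = toVq f (∑ t ∈ Finset.range (k + 1), e f (i + 2 * t))}) := by
  ext μ
  simp only [Set.mem_setOf_eq, SetLike.mem_coe]
  constructor
  · rintro ⟨hμG, hμH⟩
    have himg : {v : Vq f | ∃ j, Even j ∧ j ≤ 2*f ∧ v = toVq f (e f j)}
        = (Submodule.span (ZMod 2) {zrel f}).mkQ ''
            {u : Vt f | ∃ j, Even j ∧ j ≤ 2*f ∧ u = e f j} := by
      ext v
      constructor
      · rintro ⟨j, h1, h2, h3⟩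
        exact ⟨e f j, ⟨j, h1, h2, rfl⟩, h3.symm⟩
      · rintro ⟨u, ⟨j, h1, h2, h3⟩, h4⟩
        exact ⟨j, h1, h2, by rw [← h4, h3]; rfl⟩
    rw [hGhat, himg, Submodule.span_image, Submodule.mem_map] at hμG
    obtain ⟨u, hu, huμ⟩ := hμG
    have hμ : μ = toVq f u := by rw [← huμ]; rfl
    have huodd : ∀ t : Fin (2*f+1), Odd (t:ℕ) → u t = 0 := by
      refine Submodule.span_induction
        (p := fun v _ => ∀ t : Fin (2*f+1), Odd (t:ℕ) → v t = 0) ?_ ?_ ?_ ?_ hu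
      · rintro v ⟨j, hje, hjle, rfl⟩ t ht
        unfold e
        rw [if_neg]
        intro hh
        obtain ⟨r, hr⟩ := ht
        obtain ⟨s, hs⟩ := hje
        omega
      · intro t _
        rfl
      · intro a b _ _ ha hb t ht
        show a t + b t = 0
        rw [ha t ht, hb t ht, add_zero]
      · intro c a _ ha t ht
        show c * a t = 0
        rw [ha t ht, mul_zero]
    have hucompat : ∀ j ∈ N, Bt f u (e f j) = 0 := by
      intro j hj
      have hmem : toVq f (e f j) ∈ Hx := by
        rw [hHx]
        exact Submodule.subset_span ⟨j, hj, rfl⟩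
      have := hμH _ hmem
      rwa [hμ, Bq_mk] at this
    rw [hμ]
    exact key f N hN _ u rfl huodd hucompat
  · intro hμ
    refine Submodule.span_induction
      (p := fun v _ => v ∈ Ghat ∧ ∀ h ∈ Hx, Bq f v h = 0) ?_ ?_ ?_ ?_ hμ
    · rintro v ⟨i, k, hie, hik, hmid, hlft, hrt, rfl⟩
      constructor
      · rw [hGhat, toVq_sum]
        refine Submodule.sum_mem _ fun t ht => Submodule.subset_span ⟨i+2*t, ?_, ?_, rfl⟩
        · exact hie.add (even_two_mul t)
        · simp only [Finset.mem_range] at ht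
          omega
      · intro h hh
        rw [hHx] at hh
        refine Submodule.span_induction
          (p := fun h _ => Bq f (toVq f (∑ t ∈ Finset.range (k+1), e f (i+2*t))) h = 0)
          ?_ ?_ ?_ ?_ hh
        · rintro v ⟨j, hj, rfl⟩
          rw [Bq_mk]
          exact blk_pair f N hN i k hik hlft hrt j hj
        · exact Bq_zero_right f _
        · intro a b _ _ ha hb
          rw [Bq_add_right, ha, hb, add_zero]
        · intro c a _ ha
          rw [Bq_smul_right, ha, mul_zero]
    · exact ⟨Submodule.zero_mem _, fun h _ => Bq_zero_left f h⟩
    · rintro a b _ _ ⟨haG, haH⟩ ⟨hbG, hbH⟩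
      exact ⟨Submodule.add_mem _ haG hbG,
        fun h hh => by rw [Bq_add_left, haH h hh, hbH h hh, add_zero]⟩
    · rintro c a _ ⟨haG, haH⟩
      exact ⟨Submodule.smul_mem _ c haG,
        fun h hh => by rw [Bq_smul_left, haH h hh, mul_zero]⟩
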